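/- Let k be a positive integer and let H_m be the final subgraph produced by the online certificate process on G. Then H_m is k-connected if and only if G is k-connected. -/

import Mathlib

/-- A graph `H` on at least `k+1` vertices is `k`-connected if deleting any set of at most
`k-1` vertices leaves a connected graph. -/
def IsKConnected {V : Type*} [Fintype V] (k : ℕ) (H : SimpleGraph V) : Prop :=
  k + 1 ≤ Fintype.card V ∧
    ∀ S : Finset V, S.card ≤ k - 1 → (H.induce ((↑S : Set V)ᶜ)).Connected

/-- `H` contains `k` pairwise internally vertex-disjoint paths between `u` and `v`. -/
def InternallyDisjointPaths {V : Type*} (H : SimpleGraph V) (k : ℕ) (u v : V) : Prop :=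
  ∃ p : Fin k → H.Walk u v, (∀ i, (p i).IsPath) ∧
    ∀ i j, i ≠ j → ∀ x, x ∈ (p i).support → x ∈ (p j).support → x = u ∨ x = v

-- The online certificate process: starting from the empty graph `H_0 = ⊥`, the `i`-th input
-- edge `(e i).1 (e i).2` is added iff the current subgraph does not already contain `k`
-- pairwise internally vertex-disjoint paths between its endpoints.
open Classical in
noncomputable def certProcess {V : Type*} (k : ℕ) (e : ℕ → V × V) : ℕ → SimpleGraph V
  | 0 => ⊥
  | (i + 1) =>
      if InternallyDisjointPaths (certProcess k e i) k (e i).1 (e i).2 then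
        certProcess k e i
      else
        certProcess k e i ⊔ SimpleGraph.fromEdgeSet {s((e i).1, (e i).2)}

section Aux
variable {V : Type*}

lemma certProcess_le_succ (k : ℕ) (e : ℕ → V × V) (i : ℕ) :
    certProcess k e i ≤ certProcess k e (i + 1) := by
  simp only [certProcess]
  split
  · exact le_rfl
  · exact le_sup_left

lemma certProcess_mono (k : ℕ) (e : ℕ → V × V) {i j : ℕ} (h : i ≤ j) :
    certProcess k e i ≤ certProcess k e j := by
  induction j with
  | zero => simp_all
  | succ n ih =>
    rcases Nat.lt_or_ge i (n+1) with h' | h'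
    · exact le_trans (ih (Nat.lt_succ_iff.mp h')) (certProcess_le_succ k e n)
    · have : i = n + 1 := le_antisymm h h'
      subst this; exact le_rfl

lemma certProcess_le (k m : ℕ) (e : ℕ → V × V) (G : SimpleGraph V)
    (hadj : ∀ i < m, G.Adj (e i).1 (e i).2) :
    ∀ i ≤ m, certProcess k e i ≤ G := by
  intro i hi
  induction i with
  | zero => exact bot_le
  | succ n ih =>
    have hn : certProcess k e n ≤ G := ih (le_trans (Nat.le_succ n) hi)
    simp only [certProcess]
    split
    · exact hn
    · refine sup_le hn ?_
      intro a b hab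
      rw [SimpleGraph.fromEdgeSet_adj] at hab
      obtain ⟨hmem, hne⟩ := hab
      simp only [Set.mem_singleton_iff, Sym2.eq_iff] at hmem
      have hG := hadj n (Nat.lt_of_lt_of_le (Nat.lt_succ_self n) hi)
      rcases hmem with ⟨rfl, rfl⟩ | ⟨rfl, rfl⟩
      · exact hG
      · exact hG.symm

lemma walk_reachable_induce {H : SimpleGraph V} {T : Set V} :
    ∀ {u v : V} (w : H.Walk u v), (∀ x ∈ w.support, x ∈ T) →
      ∀ (hu : u ∈ T) (hv : v ∈ T), (H.induce T).Reachable ⟨u, hu⟩ ⟨v, hv⟩ := by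
  intro u v w
  induction w with
  | nil => intro _ hu hv; exact SimpleGraph.Reachable.refl _
  | @cons a b c h p ih =>
    intro hsup hu hv
    have hb : b ∈ T := hsup b (by simp)
    refine SimpleGraph.Reachable.trans (SimpleGraph.Adj.reachable ?_) (ih ?_ hb hv)
    · exact h
    · intro x hx; exact hsup x (by simp [hx])

lemma idp_mono {H H' : SimpleGraph V} (h : H ≤ H') {k : ℕ} {u v : V}
    (hid : InternallyDisjointPaths H k u v) : InternallyDisjointPaths H' k u v := by
  obtain ⟨p, hp, hd⟩ := hid
  refine ⟨fun i => (p i).mapLe h, fun i => (hp i).mapLe h, fun i j hij x hxi hxj => ?_⟩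
  have e1 : ∀ i, ((p i).mapLe h).support = (p i).support := by
    intro i
    have hid : ⇑(SimpleGraph.Hom.ofLE h) = id := rfl
    simp [SimpleGraph.Walk.mapLe, SimpleGraph.Walk.support_map, hid]
  rw [e1] at hxi hxj
  exact hd i j hij x hxi hxj

lemma idp_avoid {H : SimpleGraph V} {k : ℕ} {u v : V} (hk : 0 < k)
    (hid : InternallyDisjointPaths H k u v) (S : Finset V)
    (hS : S.card ≤ k - 1) (hu : u ∉ S) (hv : v ∉ S) :
    ∃ w : H.Walk u v, ∀ x ∈ w.support, x ∉ S := by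
  obtain ⟨p, hp, hd⟩ := hid
  by_contra hcon
  push_neg at hcon
  have hex : ∀ i : Fin k, ∃ x, x ∈ (p i).support ∧ x ∈ S := by
    intro i
    obtain ⟨x, hx1, hx2⟩ := hcon (p i)
    exact ⟨x, hx1, hx2⟩
  choose f hf1 hf2 using hex
  have hinj : Function.Injective f := by
    intro i j hij
    by_contra hne
    rcases hd i j hne (f i) (hf1 i) (hij ▸ hf1 j) with rfl | rfl
    · exact hu (hf2 i)
    · exact hv (hf2 i)
  have : Fintype.card (Fin k) ≤ S.card := by
    have := Finset.card_le_card_of_injOn (s := Finset.univ) f (fun i _ => hf2 i) hinj.injOn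
    simpa using this
  simp only [Fintype.card_fin] at this
  omega

end Aux

/-- The final subgraph `H_m` produced by the online certificate process on `G` is
`k`-connected if and only if `G` is `k`-connected. -/
theorem certProcess_kConnected_iff {V : Type*} [Fintype V] (G : SimpleGraph V)
    (k m : ℕ) (hk : 0 < k)
    (e : ℕ → V × V)
    (hadj : ∀ i < m, G.Adj (e i).1 (e i).2)
    (hinj : ∀ i < m, ∀ j < m, s((e i).1, (e i).2) = s((e j).1, (e j).2) → i = j)
    (hcov : ∀ a b, G.Adj a b → ∃ i < m, s((e i).1, (e i).2) = s(a, b)) :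
    IsKConnected k (certProcess k e m) ↔ IsKConnected k G := by
  set Hm := certProcess k e m with hHm
  have hle : Hm ≤ G := certProcess_le k m e G hadj m le_rfl
  constructor
  · rintro ⟨hcard, hconn⟩
    refine ⟨hcard, fun S hS => ?_⟩
    exact (hconn S hS).mono (fun a b hab => hle hab)
  · rintro ⟨hcard, hconn⟩
    refine ⟨hcard, fun S hS => ?_⟩
    have hG := hconn S hS
    -- core lemma: every G-edge between vertices off S gives reachability in Hm off S
    have core : ∀ a b : V, G.Adj a b → ∀ (ha : a ∈ ((↑S : Set V)ᶜ)) (hb : b ∈ ((↑S : Set V)ᶜ)),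
        (Hm.induce ((↑S : Set V)ᶜ)).Reachable ⟨a, ha⟩ ⟨b, hb⟩ := by
      intro a b hab ha hb
      by_cases hH : Hm.Adj a b
      · exact SimpleGraph.Adj.reachable hH
      · obtain ⟨i, him, hsym⟩ := hcov a b hab
        have hidp : InternallyDisjointPaths (certProcess k e i) k (e i).1 (e i).2 := by
          by_contra hno
          apply hH
          have hadj1 : (certProcess k e (i+1)).Adj (e i).1 (e i).2 := by
            simp only [certProcess]
            rw [if_neg hno]
            refine Or.inr ?_
            rw [SimpleGraph.fromEdgeSet_adj]
            refine ⟨rfl, ?_⟩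
            have hne : a ≠ b := hab.ne
            intro heq
            rw [Sym2.eq_iff] at hsym
            rcases hsym with ⟨h1, h2⟩ | ⟨h1, h2⟩ <;> exact hne (by rw [← h1, ← h2, heq])
          have h2 : Hm.Adj (e i).1 (e i).2 :=
            certProcess_mono k e (Nat.succ_le_of_lt him) hadj1
          rw [Sym2.eq_iff] at hsym
          rcases hsym with ⟨h1, h2'⟩ | ⟨h1, h2'⟩
          · rwa [h1, h2'] at h2
          · rw [h1, h2'] at h2; exact h2.symm
        have hidp' : InternallyDisjointPaths Hm k (e i).1 (e i).2 :=
          idp_mono (le_trans (certProcess_mono k e (Nat.le_of_lt him)) le_rfl) hidp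
        rw [Sym2.eq_iff] at hsym
        rcases hsym with ⟨h1, h2⟩ | ⟨h1, h2⟩
        · subst h1; subst h2
          obtain ⟨w, hw⟩ := idp_avoid hk hidp' S hS (by simpa using ha) (by simpa using hb)
          exact walk_reachable_induce w (fun x hx => by simpa using hw x hx) ha hb
        · subst h1; subst h2
          obtain ⟨w, hw⟩ := idp_avoid hk hidp' S hS (by simpa using hb) (by simpa using ha)
          exact (walk_reachable_induce w (fun x hx => by simpa using hw x hx) hb ha).symm
    rw [SimpleGraph.connected_iff]
    refine ⟨?_, hG.nonempty⟩
    intro x y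
    obtain ⟨w⟩ := hG x y
    clear hconn
    induction w with
    | nil => exact SimpleGraph.Reachable.refl _
    | @cons a b c h p ih =>
      have hab : G.Adj ↑a ↑b := h
      exact SimpleGraph.Reachable.trans (core ↑a ↑b hab a.2 b.2) ih
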